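/- Let (G,γ) be a Z²-colored graph with n vertices, c connected components, and Z²-rank k, and let d assign a direction to each edge. The space of collapsed realizations (p,L) — pairs with p: V(G) → R² and L ∈ Mat_{2×2}(R) satisfying p_j + L·γ_{ij} − p_i = 0 for every edge ij — is a linear subspace of R^{2n+4} of dimension at least 4 − 2k + 2c. -/

import Mathlib

open Finset

section Defs
variable {V E : Type} [Fintype V] [DecidableEq V] [Fintype E] [DecidableEq E]

/-- Signed incidence of edge `e` at vertex `v`. -/
def incid (th hd : E → V) (e : E) (v : V) : ℤ :=
  (if hd e = v then 1 else 0) - (if th e = v then 1 else 0)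

/-- `x : E → ℤ` is a cycle (1-chain with zero boundary) supported on the edge set `S`. -/
def IsCycle (th hd : E → V) (S : Finset E) (x : E → ℤ) : Prop :=
  (∀ e ∉ S, x e = 0) ∧ ∀ v : V, ∑ e, x e * incid th hd e v = 0

/-- Signed color-sum of a chain. -/
def rho (γ : E → ℤ × ℤ) (x : E → ℤ) : ℤ × ℤ := ∑ e, x e • γ e

def q2 (p : ℤ × ℤ) : ℚ × ℚ := ((p.1 : ℚ), (p.2 : ℚ))

/-- The ℤ²-rank of the colored subgraph with edge set `S`. -/
noncomputable def zrank (th hd : E → V) (γ : E → ℤ × ℤ) (S : Finset E) : ℕ :=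
  Module.finrank ℚ (Submodule.span ℚ (q2 '' (rho γ '' {x | IsCycle th hd S x})))

/-- Adjacency via an edge in `S`. -/
def adjS (th hd : E → V) (S : Finset E) (u v : V) : Prop :=
  ∃ e ∈ S, (th e = u ∧ hd e = v) ∨ (th e = v ∧ hd e = u)

/-- Vertices spanned by the edge set `S`. -/
def verts (th hd : E → V) (S : Finset E) : Finset V := S.image th ∪ S.image hd

/-- Number of connected components of the subgraph induced by the edge set `S`
(on the vertices it spans). -/
noncomputable def ncomp (th hd : E → V) (S : Finset E) : ℕ :=
  Nat.card (Quotient (Relation.EqvGen.setoid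
    (fun a b : {v : V // v ∈ verts th hd S} => adjS th hd S a.1 b.1)))

/-- The subgraph with edge set `S` is connected and spans all vertices. -/
def Conn (th hd : E → V) (S : Finset E) : Prop :=
  ∀ u v : V, Relation.EqvGen (adjS th hd S) u v

/-- The function `f(G') = n' + rk_{ℤ²}(G') − c'`. -/
noncomputable def fZ (th hd : E → V) (γ : E → ℤ × ℤ) (S : Finset E) : ℤ :=
  ((verts th hd S).card : ℤ) + (zrank th hd γ S : ℤ) - (ncomp th hd S : ℤ)

end Defs

/-- Edge set of the complete multigraph `K_n^{6,4}`. -/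
def KE (n : ℕ) : Type :=
  ({p : Fin n × Fin n // p.1 < p.2} × Fin 6) ⊕ (Fin n × Fin 4)

instance (n : ℕ) : Fintype (KE n) := by unfold KE; infer_instance
instance (n : ℕ) : DecidableEq (KE n) := by unfold KE; infer_instance

def Kt (n : ℕ) : KE n → Fin n := Sum.elim (fun q => q.1.1.1) (fun q => q.1)
def Kh (n : ℕ) : KE n → Fin n := Sum.elim (fun q => q.1.1.2) (fun q => q.1)

/-- Multiplication of a 2×2 real matrix with a vector of ℤ², landing in ℝ². -/
def Lmul (L : Matrix (Fin 2) (Fin 2) ℝ) (g : ℤ × ℤ) : ℝ × ℝ :=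
  (L 0 0 * (g.1 : ℝ) + L 0 1 * (g.2 : ℝ), L 1 0 * (g.1 : ℝ) + L 1 1 * (g.2 : ℝ))


section Aux

lemma exists_chain {V E : Type} [Fintype E] [DecidableEq E] [DecidableEq V]
    (th hd : E → V) (S : Finset E) {u v : V}
    (h : Relation.EqvGen (adjS th hd S) u v) :
    ∃ x : E → ℤ, ∀ w, ∑ e, x e * incid th hd e w =
      (if v = w then 1 else 0) - (if u = w then 1 else 0) := by
  induction h with
  | rel a b hab =>
      obtain ⟨e, -, h | h⟩ := hab
      · refine ⟨fun e' => if e' = e then 1 else 0, fun w => ?_⟩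
        rw [Finset.sum_congr rfl (g := fun e' => if e' = e then incid th hd e' w else 0)
          (fun e' _ => by dsimp only; split <;> simp), Finset.sum_ite_eq' univ e]
        simp [incid, h.1, h.2, eq_comm]
      · refine ⟨fun e' => if e' = e then -1 else 0, fun w => ?_⟩
        rw [Finset.sum_congr rfl (g := fun e' => if e' = e then -incid th hd e' w else 0)
          (fun e' _ => by dsimp only; split <;> simp), Finset.sum_ite_eq' univ e]
        simp [incid, h.1, h.2, eq_comm]
  | refl a => exact ⟨0, fun w => by simp⟩
  | symm a b _ ih =>
      obtain ⟨x, hx⟩ := ih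
      refine ⟨-x, fun w => ?_⟩
      simp only [Pi.neg_apply, neg_mul, Finset.sum_neg_distrib, hx w]
      ring
  | trans a b c _ _ ih1 ih2 =>
      obtain ⟨x, hx⟩ := ih1
      obtain ⟨y, hy⟩ := ih2
      refine ⟨x + y, fun w => ?_⟩
      simp only [Pi.add_apply, add_mul, Finset.sum_add_distrib, hx w, hy w]
      ring

def Lr (L : Matrix (Fin 2) (Fin 2) ℝ) (w : ℝ × ℝ) : ℝ × ℝ :=
  (L 0 0 * w.1 + L 0 1 * w.2, L 1 0 * w.1 + L 1 1 * w.2)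

lemma Lmul_eq_Lr (L : Matrix (Fin 2) (Fin 2) ℝ) (g : ℤ × ℤ) :
    Lmul L g = Lr L ((g.1 : ℝ), (g.2 : ℝ)) := rfl

lemma Lr_add_left (L M : Matrix (Fin 2) (Fin 2) ℝ) (w : ℝ × ℝ) :
    Lr (L + M) w = Lr L w + Lr M w := by
  simp only [Lr, Matrix.add_apply, Prod.mk_add_mk, Prod.mk.injEq]
  constructor <;> ring

lemma Lr_smul_left (r : ℝ) (L : Matrix (Fin 2) (Fin 2) ℝ) (w : ℝ × ℝ) :
    Lr (r • L) w = r • Lr L w := by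
  simp only [Lr, Matrix.smul_apply, Prod.smul_mk, smul_eq_mul, Prod.mk.injEq]
  constructor <;> ring

lemma Lr_zero_left (w : ℝ × ℝ) : Lr 0 w = 0 := by
  simp [Lr, Prod.ext_iff]

def LrL (L : Matrix (Fin 2) (Fin 2) ℝ) : (ℝ × ℝ) →ₗ[ℝ] (ℝ × ℝ) where
  toFun := Lr L
  map_add' a b := by
    simp only [Lr, Prod.fst_add, Prod.snd_add, Prod.mk_add_mk, Prod.mk.injEq]
    constructor <;> ring
  map_smul' r a := by
    simp only [Lr, Prod.smul_fst, Prod.smul_snd, smul_eq_mul, Prod.smul_mk, RingHom.id_apply,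
      Prod.mk.injEq]
    constructor <;> ring

lemma Lmul_add_right (L : Matrix (Fin 2) (Fin 2) ℝ) (a b : ℤ × ℤ) :
    Lmul L (a + b) = Lmul L a + Lmul L b := by
  simp only [Lmul, Prod.fst_add, Prod.snd_add, Prod.mk_add_mk, Prod.mk.injEq]
  push_cast
  constructor <;> ring

lemma Lmul_neg_right (L : Matrix (Fin 2) (Fin 2) ℝ) (a : ℤ × ℤ) :
    Lmul L (-a) = - Lmul L a := by
  simp only [Lmul, Prod.fst_neg, Prod.snd_neg, Prod.neg_mk, Prod.mk.injEq]
  push_cast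
  constructor <;> ring

def jQ : (ℚ × ℚ) →ₗ[ℚ] (ℝ × ℝ) where
  toFun w := ((w.1 : ℝ), (w.2 : ℝ))
  map_add' a b := by
    simp only [Prod.fst_add, Prod.snd_add, Prod.mk_add_mk, Prod.mk.injEq]
    push_cast; exact ⟨rfl, rfl⟩
  map_smul' q a := by
    simp only [Prod.smul_fst, Prod.smul_snd, RingHom.id_apply, Prod.smul_mk, Rat.smul_def,
      Prod.mk.injEq, smul_eq_mul]
    push_cast
    exact ⟨rfl, rfl⟩

lemma rho_add {V E : Type} [Fintype E] (γ : E → ℤ × ℤ) (x y : E → ℤ) :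
    rho γ (x + y) = rho γ x + rho γ y := by
  simp [rho, add_smul, Finset.sum_add_distrib]

lemma rho_neg {V E : Type} [Fintype E] (γ : E → ℤ × ℤ) (x : E → ℤ) :
    rho γ (-x) = - rho γ x := by
  simp [rho, Finset.sum_neg_distrib]

lemma rho_single {E : Type} [Fintype E] [DecidableEq E] (γ : E → ℤ × ℤ) (e : E) :
    rho γ (fun e' => if e' = e then 1 else 0) = γ e := by
  rw [rho, Finset.sum_congr rfl (g := fun e' => if e' = e then γ e' else 0)
    (fun e' _ => by split <;> simp), Finset.sum_ite_eq' univ e]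
  simp

lemma kill_lemma {V E : Type} [DecidableEq V] [Fintype E]
    (th hd : E → V) (γ : E → ℤ × ℤ) (L : Matrix (Fin 2) (Fin 2) ℝ)
    (sp : Submodule ℚ (ℚ × ℚ))
    (hsp : sp = Submodule.span ℚ (q2 '' (rho γ '' {x | IsCycle th hd (univ : Finset E) x})))
    (z : Fin (Module.finrank ℚ sp) → ℝ × ℝ)
    (hz : ∀ i, z i = jQ ((Module.finBasis ℚ sp) i : ℚ × ℚ))
    (hL : ∀ i, Lr L (z i) = 0)
    (x : E → ℤ) (hx : IsCycle th hd (univ : Finset E) x) :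
    Lmul L (rho γ x) = 0 := by
  have hmem : q2 (rho γ x) ∈ sp := by
    rw [hsp]
    exact Submodule.subset_span ⟨rho γ x, ⟨x, hx, rfl⟩, rfl⟩
  set b := Module.finBasis ℚ sp with hb
  set g : sp := ⟨q2 (rho γ x), hmem⟩ with hg
  have hrepr : ((∑ i, b.repr g i • b i : sp) : ℚ × ℚ) = (g : ℚ × ℚ) := by
    rw [Module.Basis.sum_repr]
  have hjq : jQ (g : ℚ × ℚ) = ∑ i, b.repr g i • jQ ((b i : ℚ × ℚ)) := by
    rw [← hrepr]
    push_cast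
    rw [map_sum]
    simp [Submodule.coe_smul, map_smul]
  have hspan : jQ (g : ℚ × ℚ) ∈ Submodule.span ℝ (Set.range z) := by
    have : jQ (g : ℚ × ℚ) ∈ (Submodule.span ℝ (Set.range z)).restrictScalars ℚ := by
      rw [hjq]
      refine Submodule.sum_mem _ (fun i _ => Submodule.smul_mem _ _ ?_)
      rw [← hz i]
      exact Submodule.subset_span (Set.mem_range_self i)
    exact this
  have hker : Submodule.span ℝ (Set.range z) ≤ LinearMap.ker (LrL L) := by
    rw [Submodule.span_le]
    rintro w ⟨i, rfl⟩
    exact hL i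
  have h0 : LrL L (jQ (g : ℚ × ℚ)) = 0 := hker hspan
  have hco : jQ (g : ℚ × ℚ) = (((rho γ x).1 : ℝ), ((rho γ x).2 : ℝ)) := by
    simp [jQ, hg, q2]
  rw [Lmul_eq_Lr, ← hco]
  exact h0

end Aux

/-- For a colored graph with ℤ²-rank `k` and `c` connected components, the set of collapsed
realizations `(p, L)` (satisfying `p_j + L·γ_{ij} = p_i` for every edge `ij`) is a linear
subspace of `(ℝ²)^V × Mat₂ₓ₂(ℝ) ≅ ℝ^{2n+4}` of dimension at least `4 − 2k + 2c`. -/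
theorem statement17 {V E : Type} [Fintype V] [DecidableEq V] [Fintype E] [DecidableEq E]
    (th hd : E → V) (γ : E → ℤ × ℤ) (d : E → ℝ × ℝ) (k c : ℕ)
    (hk : zrank th hd γ Finset.univ = k)
    (hc : Nat.card (Quotient (Relation.EqvGen.setoid
        (adjS th hd (Finset.univ : Finset E)))) = c) :
    ∃ W : Submodule ℝ ((V → ℝ × ℝ) × Matrix (Fin 2) (Fin 2) ℝ),
      (∀ pL : (V → ℝ × ℝ) × Matrix (Fin 2) (Fin 2) ℝ,
        pL ∈ W ↔ ∀ e : E, pL.1 (hd e) + Lmul pL.2 (γ e) = pL.1 (th e)) ∧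
      (4 - 2 * (k : ℤ) + 2 * (c : ℤ) ≤ (Module.finrank ℝ W : ℤ)) := by
  classical
  letI s : Setoid V := Relation.EqvGen.setoid (adjS th hd (Finset.univ : Finset E))
  let W : Submodule ℝ ((V → ℝ × ℝ) × Matrix (Fin 2) (Fin 2) ℝ) :=
    { carrier := {pL | ∀ e : E, pL.1 (hd e) + Lmul pL.2 (γ e) = pL.1 (th e)}
      add_mem' := by
        intro a b ha hb e
        have h1 := ha e
        have h2 := hb e
        simp only [Set.mem_setOf_eq, Prod.fst_add, Pi.add_apply, Prod.snd_add,
          Lmul_eq_Lr, Lr_add_left] at *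
        linear_combination h1 + h2
      zero_mem' := by
        intro e
        simp [Lmul_eq_Lr, Lr_zero_left]
      smul_mem' := by
        intro r a ha e
        have h1 := ha e
        simp only [Set.mem_setOf_eq, Prod.smul_fst, Pi.smul_apply, Prod.smul_snd,
          Lmul_eq_Lr, Lr_smul_left] at *
        rw [← smul_add, h1] }
  refine ⟨W, fun pL => Iff.rfl, ?_⟩
  -- chains connecting each vertex to the representative of its component
  have hconn : ∀ v : V, Relation.EqvGen (adjS th hd (Finset.univ : Finset E))
      (Quotient.out (Quotient.mk s v)) v := by
    intro v
    exact Quotient.exact (Quotient.out_eq (Quotient.mk s v))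
  choose ch hch using fun v => exists_chain th hd (Finset.univ : Finset E) (hconn v)
  set σ : V → ℤ × ℤ := fun v => rho γ (ch v) with hσ
  set sp : Submodule ℚ (ℚ × ℚ) :=
    Submodule.span ℚ (q2 '' (rho γ '' {x | IsCycle th hd (Finset.univ : Finset E) x})) with hsp
  set z : Fin (Module.finrank ℚ sp) → ℝ × ℝ :=
    fun i => jQ ((Module.finBasis ℚ sp) i : ℚ × ℚ) with hzdef
  let T : Matrix (Fin 2) (Fin 2) ℝ →ₗ[ℝ] (Fin (Module.finrank ℚ sp) → ℝ × ℝ) :=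
    { toFun := fun L i => Lr L (z i)
      map_add' := fun L M => by funext i; exact Lr_add_left L M (z i)
      map_smul' := fun r L => by funext i; exact Lr_smul_left r L (z i) }
  have hkill : ∀ L ∈ LinearMap.ker T, ∀ x : E → ℤ,
      IsCycle th hd (Finset.univ : Finset E) x → Lmul L (rho γ x) = 0 := by
    intro L hL x hx
    refine kill_lemma th hd γ L sp hsp z (fun i => rfl) (fun i => ?_) x hx
    exact congrFun (LinearMap.mem_ker.mp hL) i
  -- membership of the parametrized solutions
  have hmem : ∀ (f : Quotient s → ℝ × ℝ) (L : Matrix (Fin 2) (Fin 2) ℝ),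
      L ∈ LinearMap.ker T →
      ((fun v => f (Quotient.mk s v) - Lmul L (σ v), L) :
        (V → ℝ × ℝ) × Matrix (Fin 2) (Fin 2) ℝ) ∈ W := by
    intro f L hL e
    have hq : (Quotient.mk s (th e)) = (Quotient.mk s (hd e)) :=
      Quotient.sound (Relation.EqvGen.rel _ _ ⟨e, Finset.mem_univ e, Or.inl ⟨rfl, rfl⟩⟩)
    have hcyc : IsCycle th hd (Finset.univ : Finset E)
        (ch (th e) + (fun e' => if e' = e then 1 else 0) + (-(ch (hd e)))) := by
      refine ⟨fun e' h => absurd (Finset.mem_univ e') h, fun w => ?_⟩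
      simp only [Pi.add_apply, Pi.neg_apply, add_mul, neg_mul, Finset.sum_add_distrib,
        Finset.sum_neg_distrib]
      have hmid : ∑ e' : E, (if e' = e then (1:ℤ) else 0) * incid th hd e' w
          = incid th hd e w := by
        rw [Finset.sum_congr rfl (g := fun e' => if e' = e then incid th hd e' w else 0)
          (fun e' _ => by split <;> simp), Finset.sum_ite_eq' univ e,
          if_pos (Finset.mem_univ e)]
      rw [hmid, hch (th e) w, hch (hd e) w]
      have hout : Quotient.out (Quotient.mk s (th e)) = Quotient.out (Quotient.mk s (hd e)) := by
        rw [hq]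
      rw [hout]
      simp only [incid]
      ring
    have h0 := hkill L hL _ hcyc
    rw [rho_add (V := V), rho_add (V := V), rho_single, rho_neg (V := V),
      Lmul_add_right, Lmul_add_right, Lmul_neg_right] at h0
    show f (Quotient.mk s (hd e)) - Lmul L (σ (hd e)) + Lmul L (γ e)
        = f (Quotient.mk s (th e)) - Lmul L (σ (th e))
    rw [hq]
    have hσ1 : σ (th e) = rho γ (ch (th e)) := rfl
    have hσ2 : σ (hd e) = rho γ (ch (hd e)) := rfl
    rw [hσ1, hσ2]
    linear_combination h0
  -- the injective linear map
  let Φ0 : ((Quotient s → ℝ × ℝ) × Matrix (Fin 2) (Fin 2) ℝ) →ₗ[ℝ]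
      ((V → ℝ × ℝ) × Matrix (Fin 2) (Fin 2) ℝ) :=
    { toFun := fun fL => (fun v => fL.1 (Quotient.mk s v) - Lmul fL.2 (σ v), fL.2)
      map_add' := fun a b => by
        refine Prod.ext ?_ rfl
        funext v
        simp only [Prod.fst_add, Pi.add_apply, Prod.snd_add, Lmul_eq_Lr, Lr_add_left]
        ring
      map_smul' := fun r a => by
        refine Prod.ext ?_ rfl
        funext v
        simp only [Prod.smul_fst, Pi.smul_apply, Prod.smul_snd, RingHom.id_apply,
          Lmul_eq_Lr, Lr_smul_left]
        rw [smul_sub] }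
  let Ψ : ((Quotient s → ℝ × ℝ) × ↥(LinearMap.ker T)) →ₗ[ℝ] ↥W :=
    LinearMap.codRestrict W
      (Φ0.comp (LinearMap.prodMap LinearMap.id (LinearMap.ker T).subtype))
      (fun a => hmem a.1 a.2.1 a.2.2)
  have hinj : Function.Injective Ψ := by
    rw [← LinearMap.ker_eq_bot, LinearMap.ker_eq_bot']
    intro a ha
    have h1 : ((Ψ a : ↥W) : (V → ℝ × ℝ) × Matrix (Fin 2) (Fin 2) ℝ) = 0 := by
      rw [ha]; rfl
    have hL0 : (a.2 : Matrix (Fin 2) (Fin 2) ℝ) = 0 := congrArg Prod.snd h1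
    have hf : ∀ v, a.1 (Quotient.mk s v) - Lmul (a.2 : Matrix (Fin 2) (Fin 2) ℝ) (σ v) = 0 :=
      fun v => congrFun (congrArg Prod.fst h1) v
    have hf' : ∀ q : Quotient s, a.1 q = 0 := by
      intro q
      induction q using Quotient.ind with
      | _ v =>
        have h2 := hf v
        rw [hL0, Lmul_eq_Lr, Lr_zero_left, sub_zero] at h2
        exact h2
    exact Prod.ext (funext hf') (Subtype.ext hL0)
  -- dimension counting
  haveI : Fintype (Quotient s) := Fintype.ofFinite _
  have hQ : Fintype.card (Quotient s) = c := by
    rw [← Nat.card_eq_fintype_card]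
    exact hc
  have hd1 : Module.finrank ℝ ((Quotient s → ℝ × ℝ) × ↥(LinearMap.ker T)) =
      2 * c + Module.finrank ℝ ↥(LinearMap.ker T) := by
    rw [Module.finrank_prod]
    congr 1
    rw [Module.finrank_pi_fintype]
    simp only [Module.finrank_prod, Module.finrank_self, Finset.sum_const,
      Finset.card_univ, smul_eq_mul, hQ]
    ring
  have hkk : Module.finrank ℚ ↥sp = k := by
    rw [hsp]
    exact hk
  have hrn := LinearMap.finrank_range_add_finrank_ker T
  have hrank4 : Module.finrank ℝ (Matrix (Fin 2) (Fin 2) ℝ) = 4 := by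
    simp [Module.finrank_matrix]
  rw [hrank4] at hrn
  have hle : Module.finrank ℝ ↥(LinearMap.range T) ≤ 2 * k := by
    calc Module.finrank ℝ ↥(LinearMap.range T)
        ≤ Module.finrank ℝ (Fin (Module.finrank ℚ sp) → ℝ × ℝ) := Submodule.finrank_le _
      _ = 2 * k := by
          rw [Module.finrank_pi_fintype]
          simp only [Module.finrank_prod, Module.finrank_self, Finset.sum_const,
            Finset.card_univ, smul_eq_mul, Fintype.card_fin, hkk]
          ring
  have hWle : Module.finrank ℝ ((Quotient s → ℝ × ℝ) × ↥(LinearMap.ker T)) ≤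
      Module.finrank ℝ ↥W :=
    LinearMap.finrank_le_finrank_of_injective hinj
  rw [hd1] at hWle
  omega
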